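/- Mehler's formula: for real λ with |λ| < 1 and all real x, y, ∑_{m=0}^∞ (λ^m / (2^m m!)) h_m(x) h_m(y) = (1-λ²)^{-1/2} exp(-((1+λ²)/(2(1-λ²)))(x²+y²) + (2λ/(1-λ²)) xy), where h_m(x) = e^{-x²/2} H_m(x). -/

import Mathlib

open MeasureTheory Complex Real

noncomputable def Hphys (n : ℕ) (x : ℝ) : ℝ :=
  (-1 : ℝ)^n * Real.exp (x^2) * iteratedDeriv n (fun t : ℝ => Real.exp (-t^2)) x

noncomputable def hFun (n : ℕ) (x : ℝ) : ℝ := Real.exp (-x^2/2) * Hphys n x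



lemma abs_pow_le_gauss (n : ℕ) {ε : ℝ} (hε : 0 < ε) (s : ℝ) :
    |s| ^ n ≤ Real.sqrt (n.factorial / ε ^ n) * Real.exp (ε * s ^ 2 / 2) := by
  have h1 : (ε * s ^ 2) ^ n / n.factorial ≤ Real.exp (ε * s ^ 2) := by
    have := Real.sum_le_exp_of_nonneg (by positivity : (0:ℝ) ≤ ε * s ^ 2) (n + 1)
    refine le_trans ?_ this
    exact Finset.single_le_sum (f := fun i => (ε * s ^ 2) ^ i / i.factorial)
      (fun i _ => by positivity) (Finset.self_mem_range_succ n)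
  have h2 : (|s| ^ n) ^ 2 ≤ (Real.sqrt (n.factorial / ε ^ n) * Real.exp (ε * s ^ 2 / 2)) ^ 2 := by
    rw [mul_pow, Real.sq_sqrt (by positivity), ← Real.exp_nat_mul]
    have h3 : (|s| ^ n) ^ 2 = (s ^ 2) ^ n := by
      rw [← _root_.sq_abs s]; ring
    rw [h3]
    have hεn : (0:ℝ) < ε ^ n := by positivity
    rw [show ((2:ℕ):ℝ) * (ε * s ^ 2 / 2) = ε * s ^ 2 by push_cast; ring]
    rw [div_mul_eq_mul_div, le_div_iff₀ hεn]
    calc (s ^ 2) ^ n * ε ^ n = (ε * s ^ 2) ^ n := by rw [← mul_pow]; ring_nf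
    _ ≤ n.factorial * Real.exp (ε * s ^ 2) := by
        rw [div_le_iff₀ (by positivity : (0:ℝ) < (n.factorial:ℝ))] at h1
        linarith [h1]
  calc |s| ^ n = Real.sqrt ((|s| ^ n) ^ 2) := (Real.sqrt_sq (by positivity)).symm
  _ ≤ Real.sqrt ((Real.sqrt (n.factorial / ε ^ n) * Real.exp (ε * s ^ 2 / 2)) ^ 2) :=
      Real.sqrt_le_sqrt h2
  _ = _ := Real.sqrt_sq (by positivity)

-- norm of the basic integrand
lemma norm_term (c : ℂ) (n : ℕ) (x s : ℝ) :
    ‖c ^ n * Complex.exp (-(s:ℂ) ^ 2 + 2 * I * s * x)‖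
      = ‖c‖ ^ n * Real.exp (-s ^ 2) := by
  rw [norm_mul, norm_pow, Complex.norm_exp]
  congr 2
  simp [Complex.add_re, Complex.mul_re, Complex.mul_im, ← Complex.ofReal_pow]

lemma integrable_P (n : ℕ) (x : ℝ) :
    Integrable (fun s : ℝ => (s:ℂ) ^ n * Complex.exp (-(s:ℂ) ^ 2 + 2 * I * s * x)) := by
  have hb : (0:ℝ) < 1/2 := by norm_num
  refine Integrable.mono' ((integrable_exp_neg_mul_sq hb).const_mul (Real.sqrt n.factorial))
    (Continuous.aestronglyMeasurable (by fun_prop)) ?_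
  filter_upwards with s
  rw [norm_term (s:ℂ) n x s]
  have h := abs_pow_le_gauss n one_pos s
  simp only [Complex.norm_real, Real.norm_eq_abs]
  calc |s| ^ n * Real.exp (-s ^ 2)
      ≤ (Real.sqrt (n.factorial / 1 ^ n) * Real.exp (1 * s ^ 2 / 2)) * Real.exp (-s^2) := by
        apply mul_le_mul_of_nonneg_right h (Real.exp_nonneg _)
    _ = Real.sqrt n.factorial * Real.exp (-(1/2) * s ^ 2) := by
        rw [one_pow, div_one, mul_assoc, ← Real.exp_add]; ring_nf

lemma integrable_J (n : ℕ) (x : ℝ) :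
    Integrable (fun s : ℝ => (2 * I * s) ^ n * Complex.exp (-(s:ℂ) ^ 2 + 2 * I * s * x)) := by
  have h : (fun s : ℝ => (2 * I * (s:ℂ)) ^ n * Complex.exp (-(s:ℂ) ^ 2 + 2 * I * s * x))
      = fun s : ℝ => (2 * I) ^ n * ((s:ℂ) ^ n * Complex.exp (-(s:ℂ) ^ 2 + 2 * I * s * x)) := by
    funext s; ring
  rw [h]
  exact (integrable_P n x).const_mul _

lemma norm_J_term (n : ℕ) (x s : ℝ) :
    ‖(2 * I * (s:ℂ)) ^ n * Complex.exp (-(s:ℂ) ^ 2 + 2 * I * s * x)‖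
      = 2 ^ n * |s| ^ n * Real.exp (-s ^ 2) := by
  rw [norm_term (2 * I * (s:ℂ)) n x s]
  have : ‖2 * I * (s:ℂ)‖ = 2 * |s| := by
    simp [norm_mul]
  rw [this, mul_pow]

lemma hasDerivAt_J (n : ℕ) (x : ℝ) :
    HasDerivAt (fun x : ℝ => ∫ s : ℝ, (2 * I * s) ^ n * Complex.exp (-(s:ℂ) ^ 2 + 2 * I * s * x))
      (∫ s : ℝ, (2 * I * s) ^ (n + 1) * Complex.exp (-(s:ℂ) ^ 2 + 2 * I * s * x)) x := by
  have key := hasDerivAt_integral_of_dominated_loc_of_deriv_le (μ := volume) (x₀ := x)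
    (F := fun (x : ℝ) (s : ℝ) => (2 * I * (s:ℂ)) ^ n * Complex.exp (-(s:ℂ) ^ 2 + 2 * I * s * x))
    (F' := fun (x : ℝ) (s : ℝ) =>
      (2 * I * (s:ℂ)) ^ (n + 1) * Complex.exp (-(s:ℂ) ^ 2 + 2 * I * s * x))
    (bound := fun s : ℝ => 2 ^ (n+1) * |s| ^ (n+1) * Real.exp (-s ^ 2))
    (s := Metric.ball x 1) (Metric.ball_mem_nhds x one_pos) ?_ (integrable_J n x) ?_ ?_ ?_ ?_
  · exact key.2
  · filter_upwards with x
    exact Continuous.aestronglyMeasurable (by fun_prop)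
  · exact (integrable_J (n+1) x).aestronglyMeasurable
  · filter_upwards with s
    intro x' _
    rw [norm_J_term]
  · have h : (fun s : ℝ => (2:ℝ) ^ (n+1) * |s| ^ (n+1) * Real.exp (-s ^ 2))
        = fun s : ℝ => 2 ^ (n+1) * ‖(s:ℂ) ^ (n+1) * Complex.exp (-(s:ℂ) ^ 2 + 2 * I * s * ((0:ℝ):ℂ))‖ := by
      funext s
      rw [norm_term (s:ℂ) (n+1) 0 s]
      simp [mul_assoc]
    rw [h]
    exact ((integrable_P (n+1) 0).norm.const_mul _)
  · filter_upwards with s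
    intro x' _
    have h0 : HasDerivAt (fun x : ℝ => -(s:ℂ) ^ 2 + 2 * I * s * x) (2 * I * s) x' := by
      have h1 : HasDerivAt (fun x : ℝ => ((x:ℂ))) 1 x' := (hasDerivAt_id x').ofReal_comp
      have h2 := (h1.const_mul (2 * I * (s:ℂ))).const_add (-(s:ℂ) ^ 2)
      simpa using h2
    have h3 := (h0.cexp.const_mul ((2 * I * (s:ℂ)) ^ n))
    exact h3.congr_deriv (by ring)

lemma sqrt_pi_cpow : ((π:ℝ):ℂ) ^ (1/2 : ℂ) = ((Real.sqrt π : ℝ) : ℂ) := by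
  rw [show (1/2 : ℂ) = ((1/2 : ℝ):ℂ) by norm_num, ← Complex.ofReal_cpow Real.pi_pos.le]
  norm_num [Real.sqrt_eq_rpow]

lemma rep (n : ℕ) (x : ℝ) :
    ((iteratedDeriv n (fun t : ℝ => Real.exp (-t^2)) x : ℝ) : ℂ)
      = ((Real.sqrt π : ℝ) : ℂ)⁻¹
        * ∫ s : ℝ, (2 * I * s) ^ n * Complex.exp (-(s:ℂ) ^ 2 + 2 * I * s * x) := by
  induction n generalizing x with
  | zero =>
    simp only [iteratedDeriv_zero, pow_zero, one_mul]
    have h := fourierIntegral_gaussian (b := 1) (by norm_num) (t := 2 * (x:ℂ))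
    have h2 : (∫ s : ℝ, Complex.exp (I * (2 * (x:ℂ)) * s) * Complex.exp (-1 * (s:ℂ) ^ 2))
        = ∫ s : ℝ, Complex.exp (-(s:ℂ) ^ 2 + 2 * I * s * x) := by
      congr 1; funext s
      rw [← Complex.exp_add]; congr 1; ring
    rw [h2] at h
    rw [h]
    have h3 : ((π:ℂ) / 1) ^ (1/2 : ℂ) = ((Real.sqrt π : ℝ) : ℂ) := by
      rw [div_one]; exact sqrt_pi_cpow
    rw [h3]
    have h4 : Complex.exp (-(2 * (x:ℂ)) ^ 2 / (4 * 1)) = ((Real.exp (-x^2) : ℝ) : ℂ) := by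
      rw [Complex.ofReal_exp]; congr 1; push_cast; ring
    rw [h4, ← mul_assoc]
    have h5 : ((Real.sqrt π : ℝ) : ℂ) ≠ 0 := by
      simp [Real.sqrt_eq_zero', Real.pi_pos, Real.pi_pos.not_ge]
    field_simp
  | succ n IH =>
    have hsmooth : ContDiff ℝ ⊤ (fun t : ℝ => Real.exp (-t^2)) := by
      have : ContDiff ℝ ⊤ (fun t : ℝ => -t^2) := by fun_prop
      exact Real.contDiff_exp.comp this
    have hdiff : DifferentiableAt ℝ (iteratedDeriv n (fun t : ℝ => Real.exp (-t^2))) x := by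
      have := hsmooth.differentiable_iteratedDeriv n (by simp)
      exact this.differentiableAt
    have h1 : HasDerivAt (fun x : ℝ => ((iteratedDeriv n (fun t : ℝ => Real.exp (-t^2)) x : ℝ) : ℂ))
        (((Real.sqrt π : ℝ) : ℂ)⁻¹
          * ∫ s : ℝ, (2 * I * s) ^ (n+1) * Complex.exp (-(s:ℂ) ^ 2 + 2 * I * s * x)) x := by
      have h := (hasDerivAt_J n x).const_mul (((Real.sqrt π : ℝ) : ℂ))⁻¹
      have hfe : (fun x : ℝ => ((Real.sqrt π : ℝ) : ℂ)⁻¹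
          * ∫ s : ℝ, (2 * I * s) ^ n * Complex.exp (-(s:ℂ) ^ 2 + 2 * I * s * x))
          = fun x : ℝ => ((iteratedDeriv n (fun t : ℝ => Real.exp (-t^2)) x : ℝ) : ℂ) := by
        funext x'; exact (IH x').symm
      rw [hfe] at h
      exact h
    have h2 := (hdiff.hasDerivAt).ofReal_comp
    have h3 := h2.unique h1
    rw [iteratedDeriv_succ, h3]
section main
variable (l x y : ℝ)


/-- summand on the product space -/
noncomputable def FF (n : ℕ) (p : ℝ × ℝ) : ℂ :=
  ((-2 * l : ℂ) * p.1 * p.2) ^ n / n.factorial *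
    (Complex.exp (-(p.1:ℂ) ^ 2 + 2 * I * p.1 * x) * Complex.exp (-(p.2:ℂ) ^ 2 + 2 * I * p.2 * y))

lemma FF_eq (n : ℕ) : FF l x y n = fun p : ℝ × ℝ =>
    (((-2 * l : ℂ) ^ n / n.factorial * ((p.1:ℂ) ^ n * Complex.exp (-(p.1:ℂ) ^ 2 + 2 * I * p.1 * x))) *
      ((p.2:ℂ) ^ n * Complex.exp (-(p.2:ℂ) ^ 2 + 2 * I * p.2 * y))) := by
  funext p; simp only [FF]; ring

lemma integrable_FF (n : ℕ) : Integrable (FF l x y n) := by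
  rw [FF_eq, Measure.volume_eq_prod]
  exact ((integrable_P n x).const_mul _).mul_prod (integrable_P n y)

lemma integral_FF (n : ℕ) : ∫ p : ℝ × ℝ, FF l x y n p
    = (-2 * l : ℂ) ^ n / n.factorial
      * ((∫ s : ℝ, (s:ℂ) ^ n * Complex.exp (-(s:ℂ) ^ 2 + 2 * I * s * x))
      * (∫ t : ℝ, (t:ℂ) ^ n * Complex.exp (-(t:ℂ) ^ 2 + 2 * I * t * y))) := by
  rw [FF_eq, Measure.volume_eq_prod]
  rw [MeasureTheory.integral_prod_mul
      (f := fun s : ℝ => (-2 * (l:ℂ)) ^ n / n.factorial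
        * ((s:ℂ) ^ n * Complex.exp (-(s:ℂ) ^ 2 + 2 * I * s * x)))
      (g := fun t : ℝ => (t:ℂ) ^ n * Complex.exp (-(t:ℂ) ^ 2 + 2 * I * t * y)),
    integral_const_mul, mul_assoc]

lemma norm_cexp (x s : ℝ) :
    ‖Complex.exp (-(s:ℂ) ^ 2 + 2 * I * s * x)‖ = Real.exp (-s ^ 2) := by
  have := norm_term 1 0 x s
  simpa using this

lemma norm_FF_eq (n : ℕ) (p : ℝ × ℝ) :
    ‖FF l x y n p‖ = (2 * |l|) ^ n * |p.1| ^ n * |p.2| ^ n / n.factorial *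
      (Real.exp (-p.1 ^ 2) * Real.exp (-p.2 ^ 2)) := by
  have hc : ((-2 * l : ℂ) * p.1 * p.2) = ((-2 * l * p.1 * p.2 : ℝ) : ℂ) := by push_cast; ring
  simp only [FF, norm_mul, norm_div, norm_pow, hc, Complex.norm_real, Real.norm_eq_abs,
    Complex.norm_natCast]
  rw [norm_cexp x p.1, norm_cexp y p.2]
  norm_num [mul_pow]

lemma norm_FF_le (n : ℕ) (p : ℝ × ℝ) :
    ‖FF l x y n p‖ ≤ (2 * |l| / (1 + |l|)) ^ n *
      (Real.exp (-((1 - |l|)/2) * p.1 ^ 2) * Real.exp (-((1 - |l|)/2) * p.2 ^ 2)) := by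
  have hε : (0:ℝ) < 1 + |l| := by positivity
  have h1 := abs_pow_le_gauss n hε p.1
  have h2 := abs_pow_le_gauss n hε p.2
  have hprod : |p.1| ^ n * |p.2| ^ n ≤ (n.factorial / (1+|l|) ^ n) *
      (Real.exp ((1+|l|) * p.1 ^ 2 / 2) * Real.exp ((1+|l|) * p.2 ^ 2 / 2)) := by
    calc |p.1| ^ n * |p.2| ^ n
        ≤ (Real.sqrt (n.factorial / (1+|l|) ^ n) * Real.exp ((1+|l|) * p.1 ^ 2 / 2)) *
          (Real.sqrt (n.factorial / (1+|l|) ^ n) * Real.exp ((1+|l|) * p.2 ^ 2 / 2)) :=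
          mul_le_mul h1 h2 (by positivity) (by positivity)
      _ = (Real.sqrt (n.factorial / (1+|l|) ^ n) * Real.sqrt (n.factorial / (1+|l|) ^ n)) *
          (Real.exp ((1+|l|) * p.1 ^ 2 / 2) * Real.exp ((1+|l|) * p.2 ^ 2 / 2)) := by ring
      _ = _ := by rw [Real.mul_self_sqrt (by positivity)]
  rw [norm_FF_eq]
  have hfac : (0:ℝ) < n.factorial := by positivity
  have hexp : ∀ a : ℝ, Real.exp ((1+|l|) * a ^ 2 / 2) * Real.exp (-a ^ 2)
      = Real.exp (-((1 - |l|)/2) * a ^ 2) := by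
    intro a; rw [← Real.exp_add]; congr 1; ring
  calc (2 * |l|) ^ n * |p.1| ^ n * |p.2| ^ n / n.factorial *
      (Real.exp (-p.1 ^ 2) * Real.exp (-p.2 ^ 2))
      = (2 * |l|) ^ n * (|p.1| ^ n * |p.2| ^ n) / n.factorial *
        (Real.exp (-p.1 ^ 2) * Real.exp (-p.2 ^ 2)) := by ring
    _ ≤ (2 * |l|) ^ n * ((n.factorial / (1+|l|) ^ n) *
          (Real.exp ((1+|l|) * p.1 ^ 2 / 2) * Real.exp ((1+|l|) * p.2 ^ 2 / 2))) / n.factorial *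
        (Real.exp (-p.1 ^ 2) * Real.exp (-p.2 ^ 2)) := by gcongr
    _ = (2 * |l| / (1 + |l|)) ^ n *
        ((Real.exp ((1+|l|) * p.1 ^ 2 / 2) * Real.exp (-p.1 ^ 2)) *
         (Real.exp ((1+|l|) * p.2 ^ 2 / 2) * Real.exp (-p.2 ^ 2))) := by
        rw [div_pow, mul_pow]; field_simp
    _ = _ := by rw [hexp p.1, hexp p.2]



lemma summable_int_norm_FF (hl : |l| < 1) :
    Summable (fun n : ℕ => ∫ p : ℝ × ℝ, ‖FF l x y n p‖) := by
  have hc : (0:ℝ) < (1 - |l|)/2 := by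
    have := abs_nonneg l; linarith
  have hB : Integrable (fun p : ℝ × ℝ =>
      Real.exp (-((1 - |l|)/2) * p.1 ^ 2) * Real.exp (-((1 - |l|)/2) * p.2 ^ 2)) := by
    rw [Measure.volume_eq_prod]
    exact (integrable_exp_neg_mul_sq hc).mul_prod (integrable_exp_neg_mul_sq hc)
  have hr0 : (0:ℝ) ≤ 2 * |l| / (1 + |l|) := by positivity
  have hr1 : 2 * |l| / (1 + |l|) < 1 := by
    rw [div_lt_one (by positivity)]
    have := abs_nonneg l; linarith
  refine Summable.of_nonneg_of_le
    (fun n => integral_nonneg fun p => norm_nonneg _)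
    (fun n => ?_)
    (((summable_geometric_of_lt_one hr0 hr1).mul_right
      (∫ p : ℝ × ℝ, Real.exp (-((1 - |l|)/2) * p.1 ^ 2) * Real.exp (-((1 - |l|)/2) * p.2 ^ 2))))
  calc ∫ p : ℝ × ℝ, ‖FF l x y n p‖
      ≤ ∫ p : ℝ × ℝ, (2 * |l| / (1 + |l|)) ^ n *
          (Real.exp (-((1 - |l|)/2) * p.1 ^ 2) * Real.exp (-((1 - |l|)/2) * p.2 ^ 2)) :=
        integral_mono (integrable_FF l x y n).norm (hB.const_mul _) (norm_FF_le l x y n)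
    _ = _ := by rw [integral_const_mul]

lemma tsum_FF_eq (p : ℝ × ℝ)
    (hFF : ∀ n, FF l x y n p = ((-2 * l : ℂ) * p.1 * p.2) ^ n / n.factorial *
      (Complex.exp (-(p.1:ℂ) ^ 2 + 2 * I * p.1 * x) *
       Complex.exp (-(p.2:ℂ) ^ 2 + 2 * I * p.2 * y))) :
    ∑' n : ℕ, FF l x y n p = Complex.exp ((-2 * l : ℂ) * p.1 * p.2) *
      (Complex.exp (-(p.1:ℂ) ^ 2 + 2 * I * p.1 * x) *
       Complex.exp (-(p.2:ℂ) ^ 2 + 2 * I * p.2 * y)) := by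
  simp only [hFF]
  rw [tsum_mul_right]
  congr 1
  rw [Complex.exp_eq_exp_ℂ, NormedSpace.exp_eq_tsum_div]

lemma integrable_G (hl : |l| < 1) :
    Integrable (fun p : ℝ × ℝ => Complex.exp ((-2 * l : ℂ) * p.1 * p.2) *
      (Complex.exp (-(p.1:ℂ) ^ 2 + 2 * I * p.1 * x) *
       Complex.exp (-(p.2:ℂ) ^ 2 + 2 * I * p.2 * y))) := by
  have hc : (0:ℝ) < 1 - |l| := by linarith
  have hB : Integrable (fun p : ℝ × ℝ =>
      Real.exp (-(1 - |l|) * p.1 ^ 2) * Real.exp (-(1 - |l|) * p.2 ^ 2)) := by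
    rw [Measure.volume_eq_prod]
    exact (integrable_exp_neg_mul_sq hc).mul_prod (integrable_exp_neg_mul_sq hc)
  refine hB.mono' (Continuous.aestronglyMeasurable (by fun_prop)) ?_
  filter_upwards with p
  have hnorm : ‖Complex.exp ((-2 * l : ℂ) * p.1 * p.2) *
      (Complex.exp (-(p.1:ℂ) ^ 2 + 2 * I * p.1 * x) *
       Complex.exp (-(p.2:ℂ) ^ 2 + 2 * I * p.2 * y))‖
      = Real.exp (-2 * l * p.1 * p.2) * (Real.exp (-p.1 ^ 2) * Real.exp (-p.2 ^ 2)) := by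
    rw [norm_mul, norm_mul, norm_cexp x p.1, norm_cexp y p.2]
    have h : (-2 * (l:ℂ)) * p.1 * p.2 = ((-2 * l * p.1 * p.2 : ℝ) : ℂ) := by push_cast; ring
    rw [h]
    simp [Complex.norm_exp]
  rw [hnorm, ← Real.exp_add, ← Real.exp_add, ← Real.exp_add]
  apply Real.exp_le_exp.mpr
  have h1 : -(2 * l * p.1 * p.2) ≤ 2 * |l| * |p.1| * |p.2| := by
    calc -(2 * l * p.1 * p.2) ≤ |2 * l * p.1 * p.2| := neg_le_abs _
    _ = 2 * |l| * |p.1| * |p.2| := by rw [abs_mul, abs_mul, abs_mul]; norm_num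
  have h2 : 2 * |l| * |p.1| * |p.2| ≤ |l| * (p.1 ^ 2 + p.2 ^ 2) := by
    nlinarith [sq_nonneg (|p.1| - |p.2|), abs_nonneg l, _root_.sq_abs p.1, _root_.sq_abs p.2]
  nlinarith [_root_.sq_abs p.1, _root_.sq_abs p.2]



lemma cpow_half (r : ℝ) (hr : 0 ≤ r) : ((r:ℝ):ℂ) ^ (1/2 : ℂ) = ((Real.sqrt r : ℝ) : ℂ) := by
  rw [show (1/2 : ℂ) = ((1/2 : ℝ):ℂ) by norm_num, ← Complex.ofReal_cpow hr]
  norm_num [Real.sqrt_eq_rpow]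

lemma integral_G (hl : |l| < 1) :
    (∫ p : ℝ × ℝ, Complex.exp ((-2 * l : ℂ) * p.1 * p.2) *
      (Complex.exp (-(p.1:ℂ) ^ 2 + 2 * I * p.1 * x) *
       Complex.exp (-(p.2:ℂ) ^ 2 + 2 * I * p.2 * y)))
    = ((Real.sqrt π : ℝ) : ℂ) * ((Real.sqrt (π / (1 - l^2)) : ℝ) : ℂ) *
        Complex.exp (((-y^2 + (x - l*y)^2 / (l^2 - 1) : ℝ)) : ℂ) := by
  have hl2 : l^2 < 1 := by
    have h := abs_lt.mp hl; nlinarith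
  have hfub := MeasureTheory.integral_integral (μ := volume) (ν := volume)
    (f := fun (s t : ℝ) => Complex.exp ((-2 * l : ℂ) * s * t) *
      (Complex.exp (-(s:ℂ) ^ 2 + 2 * I * s * x) *
       Complex.exp (-(t:ℂ) ^ 2 + 2 * I * t * y)))
    (by rw [← Measure.volume_eq_prod]; exact integrable_G l x y hl)
  rw [Measure.volume_eq_prod, ← hfub]
  have hinner : ∀ s : ℝ, (∫ t : ℝ, Complex.exp ((-2 * l : ℂ) * s * t) *
      (Complex.exp (-(s:ℂ) ^ 2 + 2 * I * s * x) *
       Complex.exp (-(t:ℂ) ^ 2 + 2 * I * t * y)))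
      = ((π:ℂ)/1) ^ (1/2 : ℂ) * Complex.exp ((l:ℂ)^2 * s^2 + (-(s:ℂ)^2 + 2*I*s*x)
          + (- 2*I*l*s*y - y^2)) := by
    intro s
    have hstep : (fun t : ℝ => Complex.exp ((-2 * l : ℂ) * s * t) *
        (Complex.exp (-(s:ℂ) ^ 2 + 2 * I * s * x) *
         Complex.exp (-(t:ℂ) ^ 2 + 2 * I * t * y)))
        = fun t : ℝ => Complex.exp (-(s:ℂ) ^ 2 + 2 * I * s * x) *
          Complex.exp ((-1 : ℂ) * t^2 + (2*I*(y:ℂ) - 2*l*s) * t + 0) := by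
      funext t
      rw [← Complex.exp_add, ← Complex.exp_add, ← Complex.exp_add]
      congr 1
      push_cast
      ring
    rw [hstep, integral_const_mul,
      integral_cexp_quadratic (b := (-1:ℂ)) (by simp) (2*I*(y:ℂ) - 2*l*s) 0]
    rw [neg_neg]
    have hq : (0 : ℂ) - (2*I*(y:ℂ) - 2*l*s)^2 / (4 * (-1))
        = (l:ℂ)^2 * s^2 + (- 2*I*l*s*y - y^2) := by
      have h4 : (2*I*(y:ℂ) - 2*l*s)^2 = -4*y^2 - 8*I*l*s*y + 4*l^2*s^2 := by
        have hI : (I:ℂ)^2 = -1 := Complex.I_sq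
        linear_combination (4*(y:ℂ)^2) * hI
      rw [h4]; ring
    rw [hq, mul_left_comm, ← Complex.exp_add]
    congr 2
    ring
  have houter : (∫ s : ℝ, ∫ t : ℝ, Complex.exp ((-2 * l : ℂ) * s * t) *
      (Complex.exp (-(s:ℂ) ^ 2 + 2 * I * s * x) *
       Complex.exp (-(t:ℂ) ^ 2 + 2 * I * t * y)))
      = ∫ s : ℝ, ((π:ℂ)/1) ^ (1/2 : ℂ) *
          Complex.exp (((l:ℂ)^2 - 1) * s^2 + (2*I*((x:ℂ) - l*y)) * s + (-(y:ℂ)^2)) := by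
    refine integral_congr_ae (Filter.Eventually.of_forall fun s => ?_)
    beta_reduce
    rw [hinner s]
    congr 2
    push_cast
    ring
  rw [houter, integral_const_mul]
  have hbre : (((l:ℂ)^2 - 1)).re < 0 := by
    have h : ((l:ℂ)^2 - 1) = ((l^2 - 1 : ℝ) : ℂ) := by push_cast; ring
    rw [h, Complex.ofReal_re]
    linarith
  rw [integral_cexp_quadratic hbre (2*I*((x:ℂ) - l*y)) (-(y:ℂ)^2)]
  have h1 : ((π:ℂ)/1) ^ (1/2 : ℂ) = ((Real.sqrt π : ℝ) : ℂ) := by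
    rw [div_one]; exact cpow_half π Real.pi_pos.le
  have h2 : ((π:ℂ) / -((l:ℂ)^2 - 1)) ^ (1/2 : ℂ) = ((Real.sqrt (π/(1 - l^2)) : ℝ) : ℂ) := by
    have h : ((π:ℂ) / -((l:ℂ)^2 - 1)) = (((π/(1 - l^2) : ℝ)) : ℂ) := by push_cast; ring
    rw [h]
    have hpos : (0:ℝ) < 1 - l^2 := by linarith
    exact cpow_half _ (le_of_lt (div_pos Real.pi_pos hpos))
  have h3 : Complex.exp (-(y:ℂ)^2 - (2*I*((x:ℂ) - l*y))^2 / (4 * ((l:ℂ)^2 - 1)))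
      = Complex.exp (((-y^2 + (x - l*y)^2 / (l^2 - 1) : ℝ)) : ℂ) := by
    congr 1
    have hI : (2*I*((x:ℂ) - l*y))^2 = -4 * ((x:ℂ) - l*y)^2 := by
      have h5 : (I:ℂ)^2 = -1 := Complex.I_sq
      linear_combination (4*((x:ℂ) - l*y)^2) * h5
    rw [hI]
    have hne : ((l:ℂ)^2 - 1) ≠ 0 := by
      intro h
      have : ((l^2 - 1 : ℝ) : ℂ) = 0 := by rw [← h]; push_cast; ring
      have := Complex.ofReal_eq_zero.mp this
      linarith
    push_cast
    field_simp
    ring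
  rw [h1, h2, h3, mul_assoc]

end main

theorem mehler_formula (l : ℝ) (hl : |l| < 1) (x y : ℝ) :
    ∑' m : ℕ, l^m / (2^m * (Nat.factorial m : ℝ)) * hFun m x * hFun m y
      = (Real.sqrt (1 - l^2))⁻¹ *
          Real.exp (-((1 + l^2) / (2 * (1 - l^2))) * (x^2 + y^2) + (2 * l / (1 - l^2)) * x * y) := by
  have hl2 : l^2 < 1 := by have := abs_lt.mp hl; nlinarith
  have h1l : (0:ℝ) < 1 - l^2 := by linarith
  set K : ℂ := ((Real.exp (-x^2/2) : ℝ):ℂ) * ((Real.exp (x^2) : ℝ):ℂ) *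
      (((Real.exp (-y^2/2) : ℝ):ℂ) * ((Real.exp (y^2) : ℝ):ℂ)) / ((π:ℝ):ℂ) with hK
  have hsπ : ((Real.sqrt π : ℝ):ℂ) ≠ 0 := by
    simp [Real.sqrt_eq_zero', Real.pi_pos, Real.pi_pos.not_ge]
  have hππ : ((π:ℝ):ℂ) = ((Real.sqrt π : ℝ):ℂ) * ((Real.sqrt π : ℝ):ℂ) := by
    rw [← Complex.ofReal_mul, Real.mul_self_sqrt Real.pi_pos.le]
  have hterm : ∀ n : ℕ, ((l^n / (2^n * (n.factorial : ℝ)) * hFun n x * hFun n y : ℝ) : ℂ)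
      = K * ∫ p : ℝ × ℝ, FF l x y n p := by
    intro n
    rw [integral_FF]
    simp only [hFun, Hphys]
    push_cast
    rw [rep n x, rep n y]
    have hJx : (∫ s : ℝ, (2 * I * s) ^ n * Complex.exp (-(s:ℂ)^2 + 2*I*s*x))
        = (2*I)^n * ∫ s : ℝ, (s:ℂ)^n * Complex.exp (-(s:ℂ)^2 + 2*I*s*x) := by
      rw [← integral_const_mul]
      congr 1; funext s; ring
    have hJy : (∫ s : ℝ, (2 * I * s) ^ n * Complex.exp (-(s:ℂ)^2 + 2*I*s*y))
        = (2*I)^n * ∫ s : ℝ, (s:ℂ)^n * Complex.exp (-(s:ℂ)^2 + 2*I*s*y) := by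
      rw [← integral_const_mul]
      congr 1; funext s; ring
    rw [hJx, hJy]
    have hppow : ((-2*(l:ℂ)))^n = (-1:ℂ)^n * (-1:ℂ)^n * ((2*I)^n * (2*I)^n) * (l:ℂ)^n / 2^n := by
      rw [eq_div_iff (pow_ne_zero _ two_ne_zero), ← mul_pow, ← mul_pow, ← mul_pow, ← mul_pow,
        ← mul_pow]
      congr 1
      linear_combination (-4*(l:ℂ)) * Complex.I_sq
    rw [show ((-2 * (l:ℝ) : ℂ)) = (-2*(l:ℂ)) by push_cast; ring, hppow, hK, hππ]
    have hfa : ((n.factorial : ℕ) : ℂ) ≠ 0 := Nat.cast_ne_zero.mpr n.factorial_ne_zero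
    simp only [Complex.ofReal_exp]
    push_cast
    field_simp
  have hHS := (hasSum_integral_of_summable_integral_norm
    (integrable_FF l x y) (summable_int_norm_FF l x y hl)).mul_left K
  have hG : (∫ p : ℝ × ℝ, ∑' n : ℕ, FF l x y n p)
      = ∫ p : ℝ × ℝ, Complex.exp ((-2 * l : ℂ) * p.1 * p.2) *
          (Complex.exp (-(p.1:ℂ) ^ 2 + 2 * I * p.1 * x) *
           Complex.exp (-(p.2:ℂ) ^ 2 + 2 * I * p.2 * y)) :=
    integral_congr_ae (Filter.Eventually.of_forall fun p =>
      tsum_FF_eq l x y p (fun n => rfl))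
  rw [hG, integral_G l x y hl] at hHS
  have hexp : Real.exp (-x^2/2) * Real.exp (x^2) * (Real.exp (-y^2/2) * Real.exp (y^2)) *
      Real.exp (-y^2 + (x - l*y)^2 / (l^2 - 1))
      = Real.exp (-((1 + l^2) / (2 * (1 - l^2))) * (x^2 + y^2) + (2 * l / (1 - l^2)) * x * y) := by
    rw [← Real.exp_add, ← Real.exp_add, ← Real.exp_add, ← Real.exp_add]
    congr 1
    have hne : l^2 - 1 ≠ 0 := by intro h; linarith
    have hne2 : 1 - l^2 ≠ 0 := by intro h; linarith
    field_simp
    ring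
  have hval : K * (((Real.sqrt π : ℝ) : ℂ) * ((Real.sqrt (π / (1 - l^2)) : ℝ) : ℂ) *
        Complex.exp (((-y^2 + (x - l*y)^2 / (l^2 - 1) : ℝ)) : ℂ))
      = (((Real.sqrt (1 - l^2))⁻¹ *
          Real.exp (-((1 + l^2) / (2 * (1 - l^2))) * (x^2 + y^2) + (2 * l / (1 - l^2)) * x * y)
          : ℝ) : ℂ) := by
    rw [hK, ← Complex.ofReal_exp]
    have hs1 : Real.sqrt (π / (1 - l^2)) = Real.sqrt π / Real.sqrt (1 - l^2) :=
      Real.sqrt_div Real.pi_pos.le _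
    have hs3 : (0:ℝ) < Real.sqrt (1 - l^2) := Real.sqrt_pos.mpr h1l
    norm_cast
    rw [hs1]
    rw [← hexp]
    have hπ := Real.pi_pos
    have h2 : Real.sqrt π * Real.sqrt π = π := Real.mul_self_sqrt Real.pi_pos.le
    field_simp
    ring_nf
    exact Real.sq_sqrt hπ.le
  rw [hval] at hHS
  have hfe : (fun n : ℕ => ((l^n / (2^n * (n.factorial : ℝ)) * hFun n x * hFun n y : ℝ) : ℂ))
      = fun n => K * ∫ p : ℝ × ℝ, FF l x y n p := funext hterm
  rw [← hfe] at hHS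
  exact (Complex.hasSum_ofReal.mp hHS).tsum_eq
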